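/- A real positive definite matrix S of order 2n belongs to K_n = {S symmetric : 2S - iJ ≥ 0} if and only if there exist a symplectic matrix M ∈ Sp(2n,ℝ) and a diagonal matrix D = diag(d₁,...,d_n) with d₁ ≥ d₂ ≥ ... ≥ d_n ≥ 1/2 such that S = Mᵀ[[D,0],[0,D]]M. -/

import Mathlib

open Matrix
open scoped ComplexOrder

noncomputable section

/-- The standard symplectic form matrix J = [[0, -I],[I, 0]] of order 2n. -/
def sympJ (n : ℕ) : Matrix (Fin n ⊕ Fin n) (Fin n ⊕ Fin n) ℝ :=
  Matrix.fromBlocks 0 (-1) 1 0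

/-- A real 2n×2n matrix L is symplectic if Lᵀ J L = J. -/
def IsSymplectic {n : ℕ} (L : Matrix (Fin n ⊕ Fin n) (Fin n ⊕ Fin n) ℝ) : Prop :=
  Lᵀ * sympJ n * L = sympJ n

/-- The convex set K_n of Gaussian covariance matrices:
real symmetric S of order 2n with 2S - iJ positive semidefinite (as a complex matrix). -/
def Kset (n : ℕ) : Set (Matrix (Fin n ⊕ Fin n) (Fin n ⊕ Fin n) ℝ) :=
  {S | S.IsSymm ∧
    ((2 : ℂ) • S.map (Complex.ofReal) - Complex.I • (sympJ n).map (Complex.ofReal)).PosSemidef}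

open Module

local notation "⟪" x ", " y "⟫" => @inner ℝ _ _ x y

lemma skew_adapted_basis (m : ℕ) : ∀ (V : Type) [NormedAddCommGroup V] [InnerProductSpace ℝ V]
    [FiniteDimensional ℝ V], finrank ℝ V = 2 * m →
    ∀ (f : V →ₗ[ℝ] V), (∀ x y : V, ⟪f x, y⟫ = -⟪x, f y⟫) → Function.Injective f →
    ∃ (b : OrthonormalBasis (Fin m ⊕ Fin m) ℝ V) (σ : Fin m → ℝ),
      (∀ i, 0 < σ i) ∧ (∀ i, f (b (Sum.inl i)) = σ i • b (Sum.inr i)) ∧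
      (∀ i, f (b (Sum.inr i)) = -(σ i) • b (Sum.inl i)) := by
  induction m with
  | zero =>
    intro V _ _ _ hV f _ _
    have : Subsingleton V := by
      rw [← Module.finrank_zero_iff (R := ℝ)]; omega
    have hb : Orthonormal ℝ (⇑(Basis.empty V : Basis (Fin 0 ⊕ Fin 0) ℝ V)) := by
      constructor
      · intro i; exact isEmptyElim i
      · intro i; exact isEmptyElim i
    exact ⟨(Basis.empty V).toOrthonormalBasis hb, Fin.elim0, fun i => isEmptyElim i,
      fun i => isEmptyElim i, fun i => isEmptyElim i⟩
  | succ m IH =>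
    intro V _ _ _ hV f hskew hinj
    classical
    -- the symmetric positive operator g = -f²
    set g : V →ₗ[ℝ] V := -(f ∘ₗ f) with hg
    have hginner : ∀ x y : V, ⟪g x, y⟫ = ⟪f x, f y⟫ := by
      intro x y
      have h1 : g x = -(f (f x)) := rfl
      rw [h1, inner_neg_left, hskew (f x) y, neg_neg]
    have hgsym : g.IsSymmetric := by
      intro x y
      calc ⟪g x, y⟫ = ⟪f x, f y⟫ := hginner x y
        _ = ⟪f y, f x⟫ := real_inner_comm _ _
        _ = ⟪g y, x⟫ := (hginner y x).symm
        _ = ⟪x, g y⟫ := real_inner_comm _ _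
    -- an eigenvector
    have i0 : Fin (2 * (m+1)) := ⟨0, by omega⟩
    set e : V := hgsym.eigenvectorBasis hV i0 with he
    set μ : ℝ := hgsym.eigenvalues hV i0 with hμ
    have heig : g e = μ • e := hgsym.apply_eigenvectorBasis hV i0
    have hnorme : ‖e‖ = 1 := (hgsym.eigenvectorBasis hV).orthonormal.1 i0
    have hene : e ≠ 0 := by intro h; rw [h] at hnorme; simp at hnorme
    have hfe : f e ≠ 0 := fun h => hene (hinj (by simpa using h))
    have hμval : μ = ‖f e‖ ^ 2 := by
      have h1 : ⟪g e, e⟫ = μ := by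
        rw [heig, real_inner_smul_left, real_inner_self_eq_norm_sq, hnorme]; ring
      rw [← h1, hginner, real_inner_self_eq_norm_sq]
    have hμpos : 0 < μ := hμval ▸ pow_pos (norm_pos_iff.mpr hfe) 2
    set σ₀ : ℝ := Real.sqrt μ with hσ₀
    have hσ₀pos : 0 < σ₀ := Real.sqrt_pos.mpr hμpos
    have hσ₀sq : σ₀ ^ 2 = μ := Real.sq_sqrt hμpos.le
    have hnormfe : ‖f e‖ = σ₀ := by
      rw [hσ₀, hμval, Real.sqrt_sq (norm_nonneg _)]
    set e' : V := σ₀⁻¹ • f e with he'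
    have hnorme' : ‖e'‖ = 1 := by
      rw [he', norm_smul, hnormfe, norm_inv, Real.norm_of_nonneg hσ₀pos.le,
        inv_mul_cancel₀ hσ₀pos.ne']
    have hee' : ⟪e, e'⟫ = 0 := by
      have h2 : ⟪e, f e⟫ = -⟪e, f e⟫ := (real_inner_comm (f e) e).trans (hskew e e)
      have h3 : ⟪e, f e⟫ = 0 := by linarith
      rw [he', real_inner_smul_right, h3, mul_zero]
    have hfe' : f e = σ₀ • e' := by
      rw [he', smul_smul, mul_inv_cancel₀ hσ₀pos.ne', one_smul]
    have hffe : f (f e) = -(μ • e) := by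
      rw [← neg_neg (f (f e)), show -(f (f e)) = g e from rfl, heig]
    have h4 : σ₀⁻¹ * σ₀ ^ 2 = σ₀ := by
      rw [pow_two, ← mul_assoc, inv_mul_cancel₀ hσ₀pos.ne', one_mul]
    have hfe'2 : f e' = -σ₀ • e := by
      rw [he', f.map_smul, hffe, smul_neg, smul_smul, ← hσ₀sq, h4, ← neg_smul]
    -- inner product facts for e, e'
    have h_ee : ⟪e, e⟫ = (1:ℝ) := by rw [real_inner_self_eq_norm_sq, hnorme]; norm_num
    have h_e'e' : ⟪e', e'⟫ = (1:ℝ) := by rw [real_inner_self_eq_norm_sq, hnorme']; norm_num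
    have h_e'e : ⟪e', e⟫ = 0 := by rw [real_inner_comm]; exact hee'
    -- the span of e, e' and its orthogonal complement
    set v2 : Fin 2 → V := ![e, e'] with hv2
    have hv2on : Orthonormal ℝ v2 := by
      rw [orthonormal_iff_ite]
      intro i j
      fin_cases i <;> fin_cases j <;> simp [hv2, h_ee, hee', h_e'e, h_e'e', hnorme, hnorme']
    set U : Submodule ℝ V := Submodule.span ℝ (Set.range v2) with hU
    set W : Submodule ℝ V := Uᗮ with hW
    have heU : e ∈ U := Submodule.subset_span ⟨0, rfl⟩
    have he'U : e' ∈ U := Submodule.subset_span ⟨1, rfl⟩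
    have hWperp : ∀ w : V, w ∈ W → ⟪e, w⟫ = 0 ∧ ⟪e', w⟫ = 0 :=
      fun w hw => ⟨(Submodule.mem_orthogonal U w).mp hw e heU,
        (Submodule.mem_orthogonal U w).mp hw e' he'U⟩
    have hWperp' : ∀ w : V, w ∈ W → ⟪w, e⟫ = 0 ∧ ⟪w, e'⟫ = 0 := fun w hw =>
      ⟨by rw [real_inner_comm]; exact (hWperp w hw).1,
       by rw [real_inner_comm]; exact (hWperp w hw).2⟩
    have hfW : ∀ w ∈ W, f w ∈ W := by
      intro w hw
      rw [hW, Submodule.mem_orthogonal]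
      intro u hu
      induction hu using Submodule.span_induction with
      | mem x hx =>
        obtain ⟨i, rfl⟩ := hx
        fin_cases i
        · show ⟪e, f w⟫ = 0
          rw [real_inner_comm, hskew, hfe', real_inner_smul_right, (hWperp' w hw).2]; ring
        · show ⟪e', f w⟫ = 0
          rw [real_inner_comm, hskew, hfe'2, real_inner_smul_right, (hWperp' w hw).1]; ring
      | zero => simp
      | add x y _ _ hx hy => rw [inner_add_left, hx, hy]; ring
      | smul c x _ hx => rw [real_inner_smul_left, hx]; ring
    have hWrank : finrank ℝ W = 2 * m := by
      have h1 : finrank ℝ U + finrank ℝ W = finrank ℝ V := Submodule.finrank_add_finrank_orthogonal U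
      have h2 : finrank ℝ U = 2 := by
        rw [hU, finrank_span_eq_card hv2on.linearIndependent]
        simp
      omega
    set fW : W →ₗ[ℝ] W := f.restrict hfW with hfWdef
    have hskewW : ∀ x y : W, ⟪fW x, y⟫ = -⟪x, fW y⟫ := by
      intro x y
      have hc : ∀ (a b : W), ⟪a, b⟫ = ⟪(a : V), (b : V)⟫ := fun a b => rfl
      rw [hc, hc, LinearMap.restrict_coe_apply, LinearMap.restrict_coe_apply]
      exact hskew _ _
    have hinjW : Function.Injective fW := by
      intro x y hxy
      apply Subtype.ext
      apply hinj
      rw [← LinearMap.restrict_coe_apply f hfW x, ← LinearMap.restrict_coe_apply f hfW y, hxy]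
    obtain ⟨bW, σW, hσWpos, hbW1, hbW2⟩ := IH W hWrank fW hskewW hinjW
    -- assemble the full family
    set v : Fin (m+1) ⊕ Fin (m+1) → V :=
      Sum.elim (Fin.cons e (fun i => (bW (Sum.inl i) : V)))
        (Fin.cons e' (fun i => (bW (Sum.inr i) : V))) with hv
    have hbWW : ∀ j, (bW j : V) ∈ W := fun j => (bW j).2
    have f1 : ∀ j, ⟪e, (bW j : V)⟫ = 0 := fun j => (hWperp _ (hbWW j)).1
    have f2 : ∀ j, ⟪e', (bW j : V)⟫ = 0 := fun j => (hWperp _ (hbWW j)).2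
    have f3 : ∀ j, ⟪(bW j : V), e⟫ = 0 := fun j => by rw [real_inner_comm]; exact f1 j
    have f4 : ∀ j, ⟪(bW j : V), e'⟫ = 0 := fun j => by rw [real_inner_comm]; exact f2 j
    have hinWinner : ∀ (a b : Fin m ⊕ Fin m),
        ⟪(bW a : V), (bW b : V)⟫ = if a = b then 1 else 0 :=
      fun a b => orthonormal_iff_ite.mp bW.orthonormal a b
    have hzs : ∀ (k : Fin m), (0 : Fin (m+1)) ≠ k.succ := fun k => (Fin.succ_ne_zero k).symm
    have hvon : Orthonormal ℝ v := by
      rw [orthonormal_iff_ite]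
      intro i j
      rcases i with i | i <;> rcases j with j | j <;>
        induction i using Fin.cases <;> induction j using Fin.cases <;>
        simp only [hv, Sum.elim_inl, Sum.elim_inr, Fin.cons_zero, Fin.cons_succ] <;>
        simp [h_ee, hee', h_e'e, h_e'e', f1, f2, f3, f4, hinWinner, hnorme, hnorme', Fin.succ_inj,
          Fin.succ_ne_zero, hzs]
    have hcard : Fintype.card (Fin (m+1) ⊕ Fin (m+1)) = finrank ℝ V := by
      simp only [Fintype.card_sum, Fintype.card_fin, hV]; omega
    set bas := basisOfLinearIndependentOfCardEqFinrank hvon.linearIndependent hcard with hbas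
    have hbasv : ⇑bas = v := coe_basisOfLinearIndependentOfCardEqFinrank _ _
    set b : OrthonormalBasis (Fin (m+1) ⊕ Fin (m+1)) ℝ V :=
      bas.toOrthonormalBasis (by rw [hbasv]; exact hvon) with hb
    have hbv : ∀ i, b i = v i := by
      intro i
      rw [hb, Basis.coe_toOrthonormalBasis, hbasv]
    refine ⟨b, Fin.cons σ₀ σW, ?_, ?_, ?_⟩
    · intro i
      induction i using Fin.cases <;> simp [hσ₀pos, hσWpos]
    · intro i
      induction i using Fin.cases <;>
        simp only [hbv, hv, Sum.elim_inl, Sum.elim_inr, Fin.cons_zero, Fin.cons_succ]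
      · exact hfe'
      · rw [← LinearMap.restrict_coe_apply f hfW, ← hfWdef, hbW1]
        simp
    · intro i
      induction i using Fin.cases <;>
        simp only [hbv, hv, Sum.elim_inl, Sum.elim_inr, Fin.cons_zero, Fin.cons_succ]
      · exact hfe'2
      · rw [← LinearMap.restrict_coe_apply f hfW, ← hfWdef, hbW2]
        simp

lemma skew_normal_form {n : ℕ} (A : Matrix (Fin n ⊕ Fin n) (Fin n ⊕ Fin n) ℝ)
    (hA : Aᵀ = -A) (hinjA : Function.Injective A.mulVec) :
    ∃ (O : Matrix (Fin n ⊕ Fin n) (Fin n ⊕ Fin n) ℝ) (σ : Fin n → ℝ),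
      Oᵀ * O = 1 ∧ O * Oᵀ = 1 ∧ (∀ i, 0 < σ i) ∧ Monotone σ ∧
      A = O * fromBlocks 0 (-(diagonal σ)) (diagonal σ) 0 * Oᵀ := by
  classical
  set V := EuclideanSpace ℝ (Fin n ⊕ Fin n) with hVdef
  set f : V →ₗ[ℝ] V := Matrix.toEuclideanLin A with hf
  have hfapp : ∀ (x : V) (p : Fin n ⊕ Fin n), f x p = (A *ᵥ (fun q => x q)) p := by
    intro x p; rfl
  have hinner : ∀ (x y : V), ⟪x, y⟫ = ∑ p, x p * y p := by
    intro x y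
    rw [PiLp.inner_apply]
    simp [RCLike.inner_apply, mul_comm]
  have hdot : ∀ (x y : (Fin n ⊕ Fin n) → ℝ), (A *ᵥ x) ⬝ᵥ y = x ⬝ᵥ (Aᵀ *ᵥ y) := by
    intro x y
    rw [Matrix.dotProduct_mulVec, Matrix.vecMul_transpose]
  have hskew : ∀ x y : V, ⟪f x, y⟫ = -⟪x, f y⟫ := by
    intro x y
    rw [hinner, hinner]
    have h1 : ∑ p, f x p * y p = (A *ᵥ (fun q => x q)) ⬝ᵥ (fun q => y q) := by
      simp only [hfapp]; rfl
    have h2 : ∑ p, x p * f y p = (fun q => x q) ⬝ᵥ (A *ᵥ (fun q => y q)) := by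
      simp only [hfapp]; rfl
    rw [h1, h2, hdot, hA, Matrix.neg_mulVec, dotProduct_neg]
  have hinjf : Function.Injective f := by
    intro x y h
    have h2 : A *ᵥ (fun q => x q) = A *ᵥ (fun q => y q) := by
      funext p; rw [← hfapp, ← hfapp, h]
    have h3 := hinjA h2
    ext p
    exact congrFun h3 p
  have hVrank : finrank ℝ V = 2 * n := by
    show finrank ℝ (EuclideanSpace ℝ (Fin n ⊕ Fin n)) = 2 * n
    rw [finrank_euclideanSpace]; simp only [Fintype.card_sum, Fintype.card_fin]; omega
  obtain ⟨b0, σ0, hσ0pos, hb01, hb02⟩ := skew_adapted_basis n V hVrank f hskew hinjf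
  -- sort
  set τ := Tuple.sort σ0 with hτ
  set σ : Fin n → ℝ := σ0 ∘ τ with hσdef
  have hmono : Monotone σ := Tuple.monotone_sort σ0
  set b : OrthonormalBasis (Fin n ⊕ Fin n) ℝ V := b0.reindex (Equiv.sumCongr τ τ).symm with hb
  have hbapp : ∀ j, b j = b0 (Equiv.sumCongr τ τ j) := by
    intro j; rw [hb, OrthonormalBasis.reindex_apply, Equiv.symm_symm]
  have hb1 : ∀ i, f (b (Sum.inl i)) = σ i • b (Sum.inr i) := by
    intro i
    rw [hbapp, hbapp]
    simpa [hσdef] using hb01 (τ i)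
  have hb2 : ∀ i, f (b (Sum.inr i)) = -(σ i) • b (Sum.inl i) := by
    intro i
    rw [hbapp, hbapp]
    simpa [hσdef] using hb02 (τ i)
  set O : Matrix (Fin n ⊕ Fin n) (Fin n ⊕ Fin n) ℝ := Matrix.of (fun p j => b j p) with hO
  have hOapp : ∀ p j, O p j = b j p := fun p j => rfl
  have hO1 : Oᵀ * O = 1 := by
    ext j k
    have h := orthonormal_iff_ite.mp b.orthonormal j k
    rw [hinner] at h
    simpa [Matrix.mul_apply, Matrix.transpose_apply, hOapp, Matrix.one_apply] using h
  have hO2 : O * Oᵀ = 1 := mul_eq_one_comm.mp hO1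
  set F : Matrix (Fin n ⊕ Fin n) (Fin n ⊕ Fin n) ℝ :=
    fromBlocks 0 (-(diagonal σ)) (diagonal σ) 0 with hF
  have hAO : A * O = O * F := by
    ext p j
    have hAOe : (A * O) p j = f (b j) p := by
      rw [hfapp]
      simp only [Matrix.mul_apply, Matrix.mulVec, dotProduct, hOapp]
    rcases j with i | i
    · rw [hAOe, hb1]
      simp only [Matrix.mul_apply, hF, PiLp.smul_apply, smul_eq_mul]
      rw [Fintype.sum_sum_type]
      simp [fromBlocks_apply₁₁, fromBlocks_apply₁₂, fromBlocks_apply₂₁, fromBlocks_apply₂₂,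
        diagonal, Finset.sum_ite_eq', hOapp, mul_comm]
      rw [WithLp.ofLp_smul, Pi.smul_apply, smul_eq_mul, mul_comm]
    · rw [hAOe, hb2]
      simp only [Matrix.mul_apply, hF, PiLp.smul_apply, smul_eq_mul]
      rw [Fintype.sum_sum_type]
      simp [fromBlocks_apply₁₁, fromBlocks_apply₁₂, fromBlocks_apply₂₁, fromBlocks_apply₂₂,
        diagonal, Finset.sum_ite_eq', hOapp, mul_comm]
      rw [WithLp.ofLp_neg, WithLp.ofLp_smul, Pi.neg_apply, Pi.smul_apply, smul_eq_mul, mul_comm]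
  refine ⟨O, σ, hO1, hO2, fun i => hσ0pos (τ i), hmono, ?_⟩
  calc A = A * (O * Oᵀ) := by rw [hO2, Matrix.mul_one]
    _ = (A * O) * Oᵀ := by rw [Matrix.mul_assoc]
    _ = O * F * Oᵀ := by rw [hAO]

lemma sympJ_transpose (n : ℕ) : (sympJ n)ᵀ = -sympJ n := by
  simp [sympJ, Matrix.fromBlocks_transpose, Matrix.fromBlocks_neg]

lemma sympJ_mul_self (n : ℕ) : sympJ n * sympJ n = -1 := by
  simp only [sympJ, Matrix.fromBlocks_multiply, Matrix.mul_zero, Matrix.zero_mul,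
    Matrix.mul_one, Matrix.one_mul, add_zero, zero_add, Matrix.neg_mul, Matrix.mul_neg,
    neg_zero]
  have h1 : (-1 : Matrix (Fin n ⊕ Fin n) (Fin n ⊕ Fin n) ℝ)
      = -fromBlocks 1 0 0 1 := by rw [Matrix.fromBlocks_one]
  rw [h1, Matrix.fromBlocks_neg, neg_zero]

lemma sympJ_mul_neg_self (n : ℕ) : sympJ n * (-sympJ n) = 1 := by
  rw [Matrix.mul_neg, sympJ_mul_self, neg_neg]

lemma isUnit_det_sympJ (n : ℕ) : IsUnit (sympJ n).det :=
  Matrix.isUnit_det_of_right_inverse (sympJ_mul_neg_self n)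

lemma diagBlocks_mul_sympJ (n : ℕ) (a : Fin n → ℝ) :
    fromBlocks (diagonal a) 0 0 (diagonal a) * sympJ n
      = sympJ n * fromBlocks (diagonal a) 0 0 (diagonal a) := by
  simp only [sympJ, Matrix.fromBlocks_multiply, Matrix.mul_zero, Matrix.zero_mul,
    Matrix.mul_one, Matrix.one_mul, add_zero, zero_add, Matrix.mul_neg, Matrix.neg_mul,
    neg_zero]

lemma williamson {n : ℕ} (S : Matrix (Fin n ⊕ Fin n) (Fin n ⊕ Fin n) ℝ) (hS : S.PosDef) :
    ∃ (M : Matrix (Fin n ⊕ Fin n) (Fin n ⊕ Fin n) ℝ) (d : Fin n → ℝ),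
      IsSymplectic M ∧ (∀ i j : Fin n, i ≤ j → d j ≤ d i) ∧ (∀ i, 0 < d i) ∧
      S = Mᵀ * Matrix.fromBlocks (Matrix.diagonal d) 0 0 (Matrix.diagonal d) * M := by
  classical
  have hSps := hS.posSemidef
  open scoped MatrixOrder in
  set T := CFC.sqrt S with hT
  open scoped MatrixOrder in
  have hTps : T.PosSemidef := (CFC.sqrt_nonneg S).posSemidef
  open scoped MatrixOrder in
  have hTT : T * T = S := CFC.sqrt_mul_sqrt_self S hSps.nonneg
  have hTsymm : Tᵀ = T := by
    ext i j
    simpa [Matrix.conjTranspose_apply] using congrFun (congrFun hTps.isHermitian.eq i) j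
  have hdetT : IsUnit T.det := by
    have h1 : T.det * T.det = S.det := by rw [← Matrix.det_mul, hTT]
    have h2 : S.det ≠ 0 := ne_of_gt hS.det_pos
    have : T.det ≠ 0 := fun h => h2 (by rw [← h1, h]; ring)
    exact isUnit_iff_ne_zero.mpr this
  have hTinv1 : T * T⁻¹ = 1 := Matrix.mul_nonsing_inv T hdetT
  have hTinv2 : T⁻¹ * T = 1 := Matrix.nonsing_inv_mul T hdetT
  have hTinvsymm : T⁻¹ᵀ = T⁻¹ := by rw [Matrix.transpose_nonsing_inv, hTsymm]
  set A := T⁻¹ * sympJ n * T⁻¹ with hA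
  have hAskew : Aᵀ = -A := by
    rw [hA, Matrix.transpose_mul, Matrix.transpose_mul, sympJ_transpose, hTinvsymm]
    simp only [Matrix.neg_mul, Matrix.mul_neg, Matrix.mul_assoc]
  have hdetTinv : IsUnit T⁻¹.det := by
    rw [Matrix.det_nonsing_inv]
    exact isUnit_ringInverse.mpr hdetT
  have hdetA : IsUnit A.det := by
    rw [hA, Matrix.det_mul, Matrix.det_mul]
    exact (hdetTinv.mul (isUnit_det_sympJ n)).mul hdetTinv
  have hinjA : Function.Injective A.mulVec :=
    Matrix.mulVec_injective_iff_isUnit.mpr ((Matrix.isUnit_iff_isUnit_det A).mpr hdetA)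
  obtain ⟨O, σ, hO1, hO2, hσpos, hσmono, hAOF⟩ := skew_normal_form A hAskew hinjA
  set d : Fin n → ℝ := fun i => (σ i)⁻¹ with hd
  set rs : Fin n → ℝ := fun i => Real.sqrt (σ i) with hrs
  set R : Matrix (Fin n ⊕ Fin n) (Fin n ⊕ Fin n) ℝ :=
    fromBlocks (diagonal rs) 0 0 (diagonal rs) with hR
  set M := R * Oᵀ * T with hM
  have hRsymm : Rᵀ = R := by
    simp [hR, Matrix.fromBlocks_transpose, Matrix.diagonal_transpose]
  have hMt : Mᵀ = T * O * R := by
    rw [hM, Matrix.transpose_mul, Matrix.transpose_mul, hRsymm, hTsymm, Matrix.transpose_transpose,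
      Matrix.mul_assoc]
  have hdiag : diagonal rs * diagonal d * diagonal rs = (1 : Matrix (Fin n) (Fin n) ℝ) := by
    have harg : (fun i => rs i * d i * rs i) = fun _ => (1:ℝ) := by
      funext i
      show Real.sqrt (σ i) * (σ i)⁻¹ * Real.sqrt (σ i) = 1
      rw [show Real.sqrt (σ i) * (σ i)⁻¹ * Real.sqrt (σ i)
          = Real.sqrt (σ i) * Real.sqrt (σ i) * (σ i)⁻¹ by ring,
        Real.mul_self_sqrt (hσpos i).le, mul_inv_cancel₀ (hσpos i).ne']
    rw [Matrix.diagonal_mul_diagonal, Matrix.diagonal_mul_diagonal, harg, Matrix.diagonal_one]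
  have hRDR : R * fromBlocks (diagonal d) 0 0 (diagonal d) * R = 1 := by
    rw [hR]
    simp only [Matrix.fromBlocks_multiply, Matrix.mul_zero, Matrix.zero_mul,
      add_zero, zero_add]
    rw [hdiag, Matrix.fromBlocks_one]
  have hRR : R * R = fromBlocks (diagonal σ) 0 0 (diagonal σ) := by
    rw [hR]
    simp only [Matrix.fromBlocks_multiply, Matrix.mul_zero, Matrix.zero_mul,
      add_zero, zero_add, Matrix.diagonal_mul_diagonal]
    have harg2 : (fun i => rs i * rs i) = σ := by
      funext i; exact Real.mul_self_sqrt (hσpos i).le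
    rw [harg2]
  have hRJR : R * sympJ n * R = fromBlocks 0 (-(diagonal σ)) (diagonal σ) 0 := by
    rw [Matrix.mul_assoc, ← diagBlocks_mul_sympJ, ← Matrix.mul_assoc, hRR]
    simp only [sympJ, Matrix.fromBlocks_multiply, Matrix.mul_zero, Matrix.zero_mul,
      add_zero, zero_add, Matrix.mul_one, Matrix.mul_neg, neg_zero]
  refine ⟨M, d, ?_, ?_, fun i => inv_pos.mpr (hσpos i), ?_⟩
  · show Mᵀ * sympJ n * M = sympJ n
    rw [hMt, hM]
    calc T * O * R * sympJ n * (R * Oᵀ * T)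
        = T * O * (R * sympJ n * R) * (Oᵀ * T) := by
          simp only [Matrix.mul_assoc]
      _ = T * O * fromBlocks 0 (-(diagonal σ)) (diagonal σ) 0 * (Oᵀ * T) := by rw [hRJR]
      _ = T * (O * fromBlocks 0 (-(diagonal σ)) (diagonal σ) 0 * Oᵀ) * T := by
          simp only [Matrix.mul_assoc]
      _ = T * A * T := by rw [← hAOF]
      _ = (T * T⁻¹) * sympJ n * (T⁻¹ * T) := by rw [hA]; simp only [Matrix.mul_assoc]
      _ = sympJ n := by rw [hTinv1, hTinv2, Matrix.one_mul, Matrix.mul_one]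
  · intro i j hij
    have := hσmono hij
    exact inv_anti₀ (hσpos i) this
  · rw [hMt, hM]
    calc S = T * T := hTT.symm
      _ = T * (O * Oᵀ) * T := by rw [hO2, Matrix.mul_one]
      _ = T * O * (R * fromBlocks (diagonal d) 0 0 (diagonal d) * R) * (Oᵀ * T) := by
          rw [hRDR, Matrix.mul_one]; simp only [Matrix.mul_assoc]
      _ = T * O * R * fromBlocks (diagonal d) 0 0 (diagonal d) * (R * Oᵀ * T) := by
          simp only [Matrix.mul_assoc]

lemma quad_entry {n : ℕ} (d : Fin n → ℝ)
    (N : Matrix (Fin n ⊕ Fin n) (Fin n ⊕ Fin n) ℂ)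
    (hN : N = (2 : ℂ) • (Matrix.fromBlocks (Matrix.diagonal d) 0 0
      (Matrix.diagonal d)).map Complex.ofReal - Complex.I • (sympJ n).map Complex.ofReal) :
    (∀ i j, N (Sum.inl i) (Sum.inl j) = if i = j then (2 * d i : ℂ) else 0) ∧
    (∀ i j, N (Sum.inl i) (Sum.inr j) = if i = j then Complex.I else 0) ∧
    (∀ i j, N (Sum.inr i) (Sum.inl j) = if i = j then -Complex.I else 0) ∧
    (∀ i j, N (Sum.inr i) (Sum.inr j) = if i = j then (2 * d i : ℂ) else 0) := by
  subst hN
  refine ⟨fun i j => ?_, fun i j => ?_, fun i j => ?_, fun i j => ?_⟩ <;>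
    by_cases h : i = j <;>
    simp [h, sympJ, Matrix.sub_apply, Matrix.smul_apply, Matrix.map_apply,
      Matrix.fromBlocks_apply₁₁, Matrix.fromBlocks_apply₁₂, Matrix.fromBlocks_apply₂₁,
      Matrix.fromBlocks_apply₂₂, Matrix.diagonal_apply, Matrix.one_apply, Ne.symm]

lemma quad_mulVec {n : ℕ} (d : Fin n → ℝ)
    (N : Matrix (Fin n ⊕ Fin n) (Fin n ⊕ Fin n) ℂ)
    (hN : N = (2 : ℂ) • (Matrix.fromBlocks (Matrix.diagonal d) 0 0
      (Matrix.diagonal d)).map Complex.ofReal - Complex.I • (sympJ n).map Complex.ofReal)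
    (x : (Fin n ⊕ Fin n) → ℂ) :
    dotProduct (star x) (N *ᵥ x)
      = ∑ i : Fin n, ((starRingEnd ℂ) (x (Sum.inl i)) * (2 * d i * x (Sum.inl i)
          + Complex.I * x (Sum.inr i))
        + (starRingEnd ℂ) (x (Sum.inr i)) * (-Complex.I * x (Sum.inl i)
          + 2 * d i * x (Sum.inr i))) := by
  obtain ⟨h11, h12, h21, h22⟩ := quad_entry d N hN
  have hmv1 : ∀ i, (N *ᵥ x) (Sum.inl i) = 2 * d i * x (Sum.inl i) + Complex.I * x (Sum.inr i) := by
    intro i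
    rw [Matrix.mulVec, dotProduct, Fintype.sum_sum_type]
    simp [h11, h12, Finset.sum_ite_eq']
  have hmv2 : ∀ i, (N *ᵥ x) (Sum.inr i) = -Complex.I * x (Sum.inl i) + 2 * d i * x (Sum.inr i) := by
    intro i
    rw [Matrix.mulVec, dotProduct, Fintype.sum_sum_type]
    simp [h21, h22, Finset.sum_ite_eq']
  rw [dotProduct, Fintype.sum_sum_type, ← Finset.sum_add_distrib]
  congr 1
  funext i
  rw [hmv1, hmv2]
  simp [Pi.star_apply, RCLike.star_def]

lemma term_eval (dv : ℝ) (a b : ℂ) :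
    (starRingEnd ℂ) a * (2 * dv * a + Complex.I * b)
      + (starRingEnd ℂ) b * (-Complex.I * a + 2 * dv * b)
    = ((2 * dv * (Complex.normSq a + Complex.normSq b)
        - 2 * ((starRingEnd ℂ) a * b).im : ℝ) : ℂ) := by
  have h1 : (starRingEnd ℂ) a * a = (Complex.normSq a : ℂ) := by
    rw [mul_comm, Complex.mul_conj]
  have h2 : (starRingEnd ℂ) b * b = (Complex.normSq b : ℂ) := by
    rw [mul_comm, Complex.mul_conj]
  have h3 : (starRingEnd ℂ) b * a = (starRingEnd ℂ) ((starRingEnd ℂ) a * b) := by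
    rw [_root_.map_mul (starRingEnd ℂ), Complex.conj_conj]; ring
  have hsc := Complex.sub_conj ((starRingEnd ℂ) a * b)
  have hII := Complex.I_mul_I
  push_cast
  push_cast at hsc
  linear_combination (2*(dv:ℂ))*h1 + (2*(dv:ℂ))*h2 - Complex.I*h3 + Complex.I*hsc
    + (2*(((starRingEnd ℂ) a * b).im:ℂ))*hII

lemma term_nonneg (dv : ℝ) (hdv : (1/2:ℝ) ≤ dv) (a b : ℂ) :
    0 ≤ 2 * dv * (Complex.normSq a + Complex.normSq b)
      - 2 * ((starRingEnd ℂ) a * b).im := by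
  have h1 : ((starRingEnd ℂ) a * b).im ≤ ‖(starRingEnd ℂ) a * b‖ :=
    le_trans (le_abs_self _) (Complex.abs_im_le_norm _)
  have h2 : ‖(starRingEnd ℂ) a * b‖ = ‖a‖ * ‖b‖ := by
    rw [norm_mul, Complex.norm_conj]
  have h4 : ‖a‖ ^ 2 = Complex.normSq a := Complex.sq_norm a
  have h5 : ‖b‖ ^ 2 = Complex.normSq b := Complex.sq_norm b
  nlinarith [sq_nonneg (‖a‖ - ‖b‖), Complex.normSq_nonneg a,
    Complex.normSq_nonneg b, norm_nonneg a, norm_nonneg b]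

lemma psd_block_iff {n : ℕ} (d : Fin n → ℝ) :
    ((2 : ℂ) • (Matrix.fromBlocks (Matrix.diagonal d) 0 0
        (Matrix.diagonal d)).map Complex.ofReal
      - Complex.I • (sympJ n).map Complex.ofReal).PosSemidef
      ↔ ∀ i, (1/2:ℝ) ≤ d i := by
  set N := (2 : ℂ) • (Matrix.fromBlocks (Matrix.diagonal d) 0 0
        (Matrix.diagonal d)).map Complex.ofReal
      - Complex.I • (sympJ n).map Complex.ofReal with hNdef
  constructor
  · intro h i
    set x : (Fin n ⊕ Fin n) → ℂ := Sum.elim (fun j => if j = i then 1 else 0)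
      (fun j => if j = i then Complex.I else 0) with hx
    have hform := h.dotProduct_mulVec_nonneg x
    rw [quad_mulVec d N hNdef x] at hform
    simp only [term_eval] at hform
    have heval : ∑ k : Fin n, ((2 * d k * (Complex.normSq (x (Sum.inl k))
          + Complex.normSq (x (Sum.inr k)))
        - 2 * ((starRingEnd ℂ) (x (Sum.inl k)) * x (Sum.inr k)).im : ℝ) : ℂ)
        = ((4 * d i - 2 : ℝ) : ℂ) := by
      rw [Finset.sum_eq_single_of_mem i (Finset.mem_univ i)]
      · simp [hx]
        ring
      · intro k _ hk
        simp [hx, hk]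
    rw [heval] at hform
    have := (Complex.zero_le_real).mp hform
    linarith
  · intro hd
    obtain ⟨h11, h12, h21, h22⟩ := quad_entry d N hNdef
    refine Matrix.PosSemidef.of_dotProduct_mulVec_nonneg ?_ ?_
    · show Nᴴ = N
      ext p q
      rcases p with i | i <;> rcases q with j | j <;>
        rw [Matrix.conjTranspose_apply] <;> by_cases h : i = j
      all_goals first
        | (subst h; simp [h11, h12, h21, h22, Complex.ext_iff])
        | (simp [h11, h12, h21, h22, h, Ne.symm h, Complex.ext_iff])
    · intro x
      rw [quad_mulVec d N hNdef x]
      simp only [term_eval]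
      apply Finset.sum_nonneg
      intro k _
      rw [Complex.zero_le_real]
      exact term_nonneg (d k) (hd k) _ _

lemma symplectic_det_ne_zero {n : ℕ} {M : Matrix (Fin n ⊕ Fin n) (Fin n ⊕ Fin n) ℝ}
    (hM : IsSymplectic M) : M.det ≠ 0 := by
  have h0 : M.det * (sympJ n).det * M.det = (sympJ n).det := by
    simpa [Matrix.det_mul, Matrix.det_transpose] using congrArg Matrix.det hM
  have h2 : (sympJ n).det ≠ 0 := (isUnit_det_sympJ n).ne_zero
  intro h
  rw [h, zero_mul, mul_zero] at h0
  exact h2 h0.symm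

lemma map_conjTranspose {n : ℕ} (M : Matrix (Fin n ⊕ Fin n) (Fin n ⊕ Fin n) ℝ) :
    (M.map Complex.ofReal)ᴴ = Mᵀ.map Complex.ofReal := by
  ext p q
  simp [Matrix.conjTranspose_apply, Matrix.map_apply, Complex.conj_ofReal]

lemma map_mul' {n : ℕ} (A B : Matrix (Fin n ⊕ Fin n) (Fin n ⊕ Fin n) ℝ) :
    (A * B).map Complex.ofReal = A.map Complex.ofReal * B.map Complex.ofReal := by
  have : (Complex.ofReal : ℝ → ℂ) = ⇑Complex.ofRealHom := rfl
  rw [this, Matrix.map_mul]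

lemma congr_psd {n : ℕ} (M S D : Matrix (Fin n ⊕ Fin n) (Fin n ⊕ Fin n) ℝ)
    (hM : IsSymplectic M) (hs : S = Mᵀ * D * M) :
    ((2 : ℂ) • S.map Complex.ofReal - Complex.I • (sympJ n).map Complex.ofReal).PosSemidef ↔
    ((2 : ℂ) • D.map Complex.ofReal - Complex.I • (sympJ n).map Complex.ofReal).PosSemidef := by
  set c := (Complex.ofReal : ℝ → ℂ)
  set Mc := M.map c with hMc
  set N := (2 : ℂ) • D.map c - Complex.I • (sympJ n).map c with hN
  have hkey : (2 : ℂ) • S.map c - Complex.I • (sympJ n).map c = Mcᴴ * N * Mc := by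
    rw [hN, Matrix.mul_sub, Matrix.sub_mul]
    rw [Matrix.mul_smul, Matrix.smul_mul, Matrix.mul_smul, Matrix.smul_mul]
    congr 1
    · rw [map_conjTranspose, ← map_mul', ← map_mul', ← hs]
    · rw [map_conjTranspose, ← map_mul', ← map_mul', hM]
  have hdetMc : IsUnit Mc.det := by
    have : Mc.det = (M.det : ℂ) := (RingHom.map_det Complex.ofRealHom M).symm
    rw [this]
    simp [symplectic_det_ne_zero hM]
  rw [hkey]
  constructor
  · intro h
    have h2 := h.conjTranspose_mul_mul_same Mc⁻¹
    have e1 : Mc * Mc⁻¹ = 1 := Matrix.mul_nonsing_inv Mc hdetMc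
    have e2 : Mc⁻¹ᴴ * Mcᴴ = 1 := by
      rw [← Matrix.conjTranspose_mul, e1, Matrix.conjTranspose_one]
    have h3 : Mc⁻¹ᴴ * (Mcᴴ * N * Mc) * Mc⁻¹ = N := by
      have e3 : Mc⁻¹ᴴ * (Mcᴴ * N * Mc) * Mc⁻¹ = (Mc⁻¹ᴴ * Mcᴴ) * N * (Mc * Mc⁻¹) := by
        simp only [Matrix.mul_assoc]
      rw [e3, e1, e2, Matrix.one_mul, Matrix.mul_one]
    rwa [h3] at h2
  · intro h
    exact h.conjTranspose_mul_mul_same Mc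

theorem mem_Kset_iff_williamson (n : ℕ)
    (S : Matrix (Fin n ⊕ Fin n) (Fin n ⊕ Fin n) ℝ) (hS : S.PosDef) :
    S ∈ Kset n ↔
      ∃ (M : Matrix (Fin n ⊕ Fin n) (Fin n ⊕ Fin n) ℝ) (d : Fin n → ℝ),
        IsSymplectic M ∧ (∀ i j : Fin n, i ≤ j → d j ≤ d i) ∧ (∀ i, (1 / 2 : ℝ) ≤ d i) ∧
        S = Mᵀ * Matrix.fromBlocks (Matrix.diagonal d) 0 0 (Matrix.diagonal d) * M := by
  constructor
  · intro hmem
    obtain ⟨hsymm, hpsd⟩ := hmem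
    obtain ⟨M, d, hsymp, hsort, hdpos, hdecomp⟩ := williamson S hS
    refine ⟨M, d, hsymp, hsort, ?_, hdecomp⟩
    have h := (congr_psd M S (Matrix.fromBlocks (Matrix.diagonal d) 0 0 (Matrix.diagonal d))
      hsymp hdecomp).mp hpsd
    exact (psd_block_iff d).mp h
  · rintro ⟨M, d, hsymp, hsort, hd, hdecomp⟩
    constructor
    · show Sᵀ = S
      rw [hdecomp, Matrix.transpose_mul, Matrix.transpose_mul, Matrix.transpose_transpose]
      have hDt : (Matrix.fromBlocks (Matrix.diagonal d) 0 0 (Matrix.diagonal d))ᵀ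
          = Matrix.fromBlocks (Matrix.diagonal d) 0 0 (Matrix.diagonal d) := by
        simp [Matrix.fromBlocks_transpose]
      rw [hDt, Matrix.mul_assoc]
    · exact (congr_psd M S _ hsymp hdecomp).mpr ((psd_block_iff d).mpr hd)
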